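/- arXiv:1712.00301 — 2 statements merged into one kernel-verified Lean document; each statement's English description precedes it below -/
import Mathlib

section
/- Let $D = \operatorname{diag}(\lambda_1,\dots,\lambda_r)$, $\tilde B \in \mathbb{R}^{r\times m}$, and assume $\lambda_i + \lambda_j \ne 0$ for all $i,j$. Let $\tilde P_{\bar T}(\lambda_1,\dots,\lambda_r)$ be the unique solution of $D\tilde P_{\bar T} + \tilde P_{\bar T}D = -\tilde B\tilde B^T + e^{D\bar T}\tilde B\tilde B^T e^{D\bar T}$. Then $X^{(i)} = \partial_{\lambda_i}\tilde P_{\bar T}$ satisfies $D X^{(i)} + X^{(i)} D = -e_i e_i^T\tilde P_{\bar T} - \tilde P_{\bar T}e_i e_i^T + \bar T e_i e_i^T e^{D\bar T}\tilde B\tilde B^T e^{D\bar T} + \bar T e^{D\bar T}\tilde B\tilde B^T e^{D\bar T} e_i e_i^T$. -/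
open Matrix

/-- The derivative `X⁽ⁱ⁾ = ∂_{λᵢ} P̃_T̄` of the solution of the time-limited
Lyapunov-type equation satisfies
`D X + X D = -eᵢeᵢᵀ P̃ - P̃ eᵢeᵢᵀ + T̄ eᵢeᵢᵀ e^{DT̄} B̃B̃ᵀ e^{DT̄} + T̄ e^{DT̄} B̃B̃ᵀ e^{DT̄} eᵢeᵢᵀ`. -/
theorem deriv_of_time_limited_gramian {r m : ℕ}
    (lam : Fin r → ℝ) (tB : Matrix (Fin r) (Fin m) ℝ) (T : ℝ) (hT : 0 < T)
    (hspec : ∀ i j, lam i + lam j ≠ 0) (i : Fin r)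
    (P : (Fin r → ℝ) → Matrix (Fin r) (Fin r) ℝ)
    (hP : ∀ l : Fin r → ℝ,
      Matrix.diagonal l * P l + P l * Matrix.diagonal l =
        -(tB * tBᵀ) + NormedSpace.exp (T • Matrix.diagonal l) * (tB * tBᵀ)
          * NormedSpace.exp (T • Matrix.diagonal l))
    (X : Matrix (Fin r) (Fin r) ℝ)
    (hX : ∀ a b, HasDerivAt (fun x : ℝ => P (Function.update lam i x) a b) (X a b) (lam i)) :
    Matrix.diagonal lam * X + X * Matrix.diagonal lam =
      -(Matrix.single i i 1 * P lam) - P lam * Matrix.single i i 1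
      + T • (Matrix.single i i 1 *
          (NormedSpace.exp (T • Matrix.diagonal lam) * (tB * tBᵀ)
            * NormedSpace.exp (T • Matrix.diagonal lam)))
      + T • ((NormedSpace.exp (T • Matrix.diagonal lam) * (tB * tBᵀ)
            * NormedSpace.exp (T • Matrix.diagonal lam)) * Matrix.single i i 1) := by
  classical
  set M : Matrix (Fin r) (Fin r) ℝ := tB * tBᵀ with hMdef
  have hexp : ∀ l : Fin r → ℝ, NormedSpace.exp (T • Matrix.diagonal l)
      = Matrix.diagonal (fun k => Real.exp (T * l k)) := by
    intro l
    have hfun : NormedSpace.exp (T • l) = fun k => Real.exp (T * l k) := by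
      funext k
      rw [Pi.coe_exp]
      simp [Real.exp_eq_exp_ℝ, smul_eq_mul]
    rw [← Matrix.diagonal_smul, Matrix.exp_diagonal, hfun]
  -- entrywise form of the Sylvester equation
  have hP' : ∀ (l : Fin r → ℝ) (a b : Fin r),
      l a * P l a b + P l a b * l b =
        -(M a b) + Real.exp (T * l a) * (M a b * Real.exp (T * l b)) := by
    intro l a b
    have h := congrFun (congrFun (congrArg (fun A => A) (hP l)) a) b
    rw [hexp l] at h
    simpa [Matrix.add_apply, Matrix.neg_apply, Matrix.diagonal_mul, Matrix.mul_diagonal,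
      mul_assoc] using h
  -- rewrite the standard basis matrix as a diagonal matrix
  have hstd : Matrix.single i i (1 : ℝ)
      = Matrix.diagonal (fun k => if k = i then (1 : ℝ) else 0) := by
    ext c d
    by_cases hc : c = i <;> by_cases hd : d = i
    · subst hc; subst hd; simp [Matrix.single, Matrix.diagonal_apply]
    · have h1 : ¬ i = d := fun h => hd h.symm
      subst hc
      simp [Matrix.single, Matrix.diagonal_apply, h1, hd]
    · have h2 : ¬ i = c := fun h => hc h.symm
      subst hd
      simp [Matrix.single, Matrix.diagonal_apply, h2, hc]
    · have h2 : ¬ i = c := fun h => hc h.symm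
      simp [Matrix.single, Matrix.diagonal_apply, h2, hc]
  -- derivative of the updated coordinate functions
  have hu : ∀ c : Fin r, HasDerivAt (fun x : ℝ => Function.update lam i x c)
      (if c = i then (1 : ℝ) else 0) (lam i) := by
    intro c
    rcases eq_or_ne c i with h | h
    · subst h
      simpa using (hasDerivAt_id' (x := lam c))
    · simpa [Function.update_of_ne h, h] using (hasDerivAt_const (lam i) (lam c))
  ext a b
  set da : ℝ := if a = i then (1 : ℝ) else 0 with hda
  set db : ℝ := if b = i then (1 : ℝ) else 0 with hdb
  -- derivative of the left-hand side (entrywise)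
  have hL : HasDerivAt (fun x : ℝ =>
      Function.update lam i x a * P (Function.update lam i x) a b
        + P (Function.update lam i x) a b * Function.update lam i x b)
      ((da * P lam a b + lam a * X a b) + (X a b * lam b + P lam a b * db)) (lam i) := by
    have h0 := ((hu a).mul (hX a b)).add ((hX a b).mul (hu b))
    simp only [Function.update_eq_self] at h0
    exact h0
  -- derivative of the right-hand side (entrywise)
  have hea : HasDerivAt (fun x : ℝ => Real.exp (T * Function.update lam i x a))
      (Real.exp (T * lam a) * (T * da)) (lam i) := by
    have h0 := ((hu a).const_mul T).exp
    simp only [Function.update_eq_self] at h0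
    convert h0 using 1
  have heb : HasDerivAt (fun x : ℝ => Real.exp (T * Function.update lam i x b))
      (Real.exp (T * lam b) * (T * db)) (lam i) := by
    have h0 := ((hu b).const_mul T).exp
    simp only [Function.update_eq_self] at h0
    convert h0 using 1
  have hR : HasDerivAt (fun x : ℝ =>
      -(M a b) + Real.exp (T * Function.update lam i x a)
        * (M a b * Real.exp (T * Function.update lam i x b)))
      (Real.exp (T * lam a) * (T * da) * (M a b * Real.exp (T * lam b))
        + Real.exp (T * lam a) * (M a b * (Real.exp (T * lam b) * (T * db)))) (lam i) := by
    have h0 := (hasDerivAt_const (lam i) (-(M a b))).add (hea.mul ((heb).const_mul (M a b)))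
    simp only [Function.update_eq_self] at h0
    refine h0.congr_deriv ?_
    ring
  have hfun : (fun x : ℝ =>
      Function.update lam i x a * P (Function.update lam i x) a b
        + P (Function.update lam i x) a b * Function.update lam i x b)
      = (fun x : ℝ =>
      -(M a b) + Real.exp (T * Function.update lam i x a)
        * (M a b * Real.exp (T * Function.update lam i x b))) := by
    funext x
    exact hP' (Function.update lam i x) a b
  rw [hfun] at hL
  have key := hL.unique hR
  -- reduce the goal to a scalar identity
  simp only [hstd, hexp, Matrix.add_apply, Matrix.sub_apply, Matrix.neg_apply,
    Matrix.smul_apply, Matrix.diagonal_mul, Matrix.mul_diagonal, smul_eq_mul, ← hMdef]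
  rw [show (if a = i then (1:ℝ) else 0) = da from rfl] <;>
    try rw [show (if b = i then (1:ℝ) else 0) = db from rfl]
  linear_combination key
end

section
/- Let $V, W \in \mathbb{R}^{n\times r}$ with $W^TV$ invertible, and set $\hat A = (W^TV)^{-1}W^TAV$, $\hat B = (W^TV)^{-1}W^TB$, $\hat C = CV$, $\operatorname{Pr} = V(W^TV)^{-1}W^T$. Assume $D \in \mathbb{R}^{r\times r}$ is diagonal, $\tilde B \in \mathbb{R}^{r\times m}$, and $V$ satisfies the Sylvester equation $-VD - AV = B\tilde B^T - e^{A\bar T}B\tilde B^T e^{D\bar T}$, with $(I\otimes A)+(D\otimes I)$ and $(I\otimes\hat A)+(D\otimes I)$ invertible. Then the difference between $(I\otimes\hat C)[(I\otimes\hat A)+(D\otimes I)]^{-1}(e^{D\bar T}\tilde B\otimes e^{\hat A\bar T}\hat B - \tilde B\otimes\hat B)\operatorname{vec}(I)$ and $(I\otimes C)[(I\otimes A)+(D\otimes I)]^{-1}(e^{D\bar T}\tilde B\otimes e^{A\bar T}B - \tilde B\otimes B)\operatorname{vec}(I)$ equals $E_c = (I\otimes\hat C)[(I\otimes\hat A)+(D\otimes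 I)]^{-1}(e^{D\bar T}\tilde B\otimes(W^TV)^{-1}W^T(e^{A\operatorname{Pr}\bar T} - e^{A\bar T})B)\operatorname{vec}(I)$. -/
open Matrix Kronecker

/-- Column-stacking vectorization of a matrix: `vecC M (j, i) = M i j`. -/
def vecC {a b : Type*} (M : Matrix a b ℝ) : b × a → ℝ := fun q => M q.2 q.1

lemma vecC_add {a b : Type*} (X Y : Matrix a b ℝ) : vecC (X + Y) = vecC X + vecC Y := rfl

lemma vecC_sub {a b : Type*} (X Y : Matrix a b ℝ) : vecC (X - Y) = vecC X - vecC Y := rfl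

lemma kron_mulVec {l m n p : Type*} [Fintype m] [Fintype p]
    (M : Matrix l m ℝ) (N : Matrix n p ℝ) (X : Matrix p m ℝ) :
    (M ⊗ₖ N) *ᵥ vecC X = vecC (N * X * Mᵀ) := by
  funext q
  obtain ⟨i, j⟩ := q
  simp only [Matrix.mulVec, vecC, dotProduct, Matrix.mul_apply, kroneckerMap_apply,
    Fintype.sum_prod_type, Matrix.transpose_apply, Finset.sum_mul, Finset.mul_sum]
  exact Finset.sum_congr rfl fun a _ => Finset.sum_congr rfl fun b _ => by ring

lemma mul_exp_intertwine {n r : ℕ} (Q : Matrix (Fin r) (Fin n) ℝ)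
    (M : Matrix (Fin n) (Fin n) ℝ) (N : Matrix (Fin r) (Fin r) ℝ)
    (h : Q * M = N * Q) :
    Q * NormedSpace.exp M = NormedSpace.exp N * Q := by
  have hk : ∀ k : ℕ, Q * M ^ k = N ^ k * Q := by
    intro k
    induction k with
    | zero => simp
    | succ k ih =>
        rw [pow_succ, ← Matrix.mul_assoc, ih, Matrix.mul_assoc, h, ← Matrix.mul_assoc, ← pow_succ]
  letI : SeminormedRing (Matrix (Fin n) (Fin n) ℝ) := Matrix.linftyOpSemiNormedRing
  letI : NormedRing (Matrix (Fin n) (Fin n) ℝ) := Matrix.linftyOpNormedRing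
  letI : NormedAlgebra ℝ (Matrix (Fin n) (Fin n) ℝ) := Matrix.linftyOpNormedAlgebra
  letI : SeminormedRing (Matrix (Fin r) (Fin r) ℝ) := Matrix.linftyOpSemiNormedRing
  letI : NormedRing (Matrix (Fin r) (Fin r) ℝ) := Matrix.linftyOpNormedRing
  letI : NormedAlgebra ℝ (Matrix (Fin r) (Fin r) ℝ) := Matrix.linftyOpNormedAlgebra
  have hsM : Summable fun k : ℕ => ((k.factorial : ℝ)⁻¹) • M ^ k :=
    NormedSpace.expSeries_summable' M
  have hsN : Summable fun k : ℕ => ((k.factorial : ℝ)⁻¹) • N ^ k :=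
    NormedSpace.expSeries_summable' N
  let L : Matrix (Fin n) (Fin n) ℝ →ₗ[ℝ] Matrix (Fin r) (Fin n) ℝ :=
    { toFun := fun X => Q * X
      map_add' := fun X Y => Matrix.mul_add _ _ _
      map_smul' := fun c X => Matrix.mul_smul _ _ _ }
  let R : Matrix (Fin r) (Fin r) ℝ →ₗ[ℝ] Matrix (Fin r) (Fin n) ℝ :=
    { toFun := fun X => X * Q
      map_add' := fun X Y => Matrix.add_mul _ _ _
      map_smul' := fun c X => Matrix.smul_mul _ _ _ }
  have hQexp : Q * NormedSpace.exp M
      = L.toContinuousLinearMap (∑' k : ℕ, ((k.factorial : ℝ)⁻¹) • M ^ k) := by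
    rw [NormedSpace.exp_eq_tsum (𝕂 := ℝ)]; rfl
  rw [hQexp, ContinuousLinearMap.map_tsum _ hsM]
  have hterm : ∀ k : ℕ, L.toContinuousLinearMap (((k.factorial : ℝ)⁻¹) • M ^ k)
      = R.toContinuousLinearMap (((k.factorial : ℝ)⁻¹) • N ^ k) := by
    intro k
    show Q * (((k.factorial : ℝ)⁻¹) • M ^ k) = (((k.factorial : ℝ)⁻¹) • N ^ k) * Q
    rw [Matrix.mul_smul, hk k, Matrix.smul_mul]
  simp_rw [hterm]
  rw [← ContinuousLinearMap.map_tsum _ hsN]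
  rw [NormedSpace.exp_eq_tsum (𝕂 := ℝ)]; rfl
/-- Error in the first optimality condition for the time-limited IRKA-type algorithm:
the difference between the reduced-order and full-order sides of the `C`-condition
equals `E_c = (I⊗Ĉ)[(I⊗Â)+(D⊗I)]⁻¹ (e^{DT̄}B̃ ⊗ (WᵀV)⁻¹Wᵀ(e^{A Pr T̄} - e^{AT̄})B) vec(I)`. -/
theorem error_in_C_optimality_condition {n r m p : ℕ}
    (A : Matrix (Fin n) (Fin n) ℝ) (B : Matrix (Fin n) (Fin m) ℝ)
    (C : Matrix (Fin p) (Fin n) ℝ)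
    (V W : Matrix (Fin n) (Fin r) ℝ) (hWV : IsUnit (Wᵀ * V))
    (Ah : Matrix (Fin r) (Fin r) ℝ) (hAh : Ah = (Wᵀ * V)⁻¹ * Wᵀ * A * V)
    (Bh : Matrix (Fin r) (Fin m) ℝ) (hBh : Bh = (Wᵀ * V)⁻¹ * Wᵀ * B)
    (Ch : Matrix (Fin p) (Fin r) ℝ) (hCh : Ch = C * V)
    (Pr : Matrix (Fin n) (Fin n) ℝ) (hPr : Pr = V * (Wᵀ * V)⁻¹ * Wᵀ)
    (d : Fin r → ℝ) (D : Matrix (Fin r) (Fin r) ℝ) (hD : D = Matrix.diagonal d)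
    (tB : Matrix (Fin r) (Fin m) ℝ) (T : ℝ)
    (hV : -(V * D) - A * V =
      B * tBᵀ - NormedSpace.exp (T • A) * (B * tBᵀ) * NormedSpace.exp (T • D))
    (hK : IsUnit ((1 : Matrix (Fin r) (Fin r) ℝ) ⊗ₖ A + D ⊗ₖ (1 : Matrix (Fin n) (Fin n) ℝ)))
    (hKh : IsUnit ((1 : Matrix (Fin r) (Fin r) ℝ) ⊗ₖ Ah + D ⊗ₖ (1 : Matrix (Fin r) (Fin r) ℝ))) :
    (((1 : Matrix (Fin r) (Fin r) ℝ) ⊗ₖ Ch) *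
        ((1 : Matrix (Fin r) (Fin r) ℝ) ⊗ₖ Ah + D ⊗ₖ (1 : Matrix (Fin r) (Fin r) ℝ))⁻¹ *
        ((NormedSpace.exp (T • D) * tB) ⊗ₖ (NormedSpace.exp (T • Ah) * Bh)
          - tB ⊗ₖ Bh)) *ᵥ vecC (1 : Matrix (Fin m) (Fin m) ℝ)
      - (((1 : Matrix (Fin r) (Fin r) ℝ) ⊗ₖ C) *
          ((1 : Matrix (Fin r) (Fin r) ℝ) ⊗ₖ A + D ⊗ₖ (1 : Matrix (Fin n) (Fin n) ℝ))⁻¹ *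
          ((NormedSpace.exp (T • D) * tB) ⊗ₖ (NormedSpace.exp (T • A) * B)
            - tB ⊗ₖ B)) *ᵥ vecC (1 : Matrix (Fin m) (Fin m) ℝ)
    = (((1 : Matrix (Fin r) (Fin r) ℝ) ⊗ₖ Ch) *
        ((1 : Matrix (Fin r) (Fin r) ℝ) ⊗ₖ Ah + D ⊗ₖ (1 : Matrix (Fin r) (Fin r) ℝ))⁻¹ *
        ((NormedSpace.exp (T • D) * tB) ⊗ₖ
          ((Wᵀ * V)⁻¹ * Wᵀ *
            (NormedSpace.exp (T • (A * Pr)) - NormedSpace.exp (T • A)) * B)))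
        *ᵥ vecC (1 : Matrix (Fin m) (Fin m) ℝ) := by
  have hdet : IsUnit (Wᵀ * V).det := (Matrix.isUnit_iff_isUnit_det _).mp hWV
  set Q := (Wᵀ * V)⁻¹ * Wᵀ with hQ
  set EA := NormedSpace.exp (T • A) with hEA
  set ED := NormedSpace.exp (T • D) with hED
  set Eh := NormedSpace.exp (T • Ah) with hEh
  set EP := NormedSpace.exp (T • (A * Pr)) with hEP
  set u := vecC (1 : Matrix (Fin m) (Fin m) ℝ) with hu
  set S := (ED * tB) ⊗ₖ (EA * B) - tB ⊗ₖ B with hSdef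
  set Sh := (ED * tB) ⊗ₖ (Eh * Bh) - tB ⊗ₖ Bh with hShdef
  set SE := (ED * tB) ⊗ₖ (Q * (EP - EA) * B) with hSEdef
  set K := (1 : Matrix (Fin r) (Fin r) ℝ) ⊗ₖ A + D ⊗ₖ (1 : Matrix (Fin n) (Fin n) ℝ) with hKdef
  set Kh := (1 : Matrix (Fin r) (Fin r) ℝ) ⊗ₖ Ah + D ⊗ₖ (1 : Matrix (Fin r) (Fin r) ℝ) with hKhdef
  have hdetK : IsUnit K.det := (Matrix.isUnit_iff_isUnit_det _).mp hK
  have hdetKh : IsUnit Kh.det := (Matrix.isUnit_iff_isUnit_det _).mp hKh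
  have hQV : Q * V = 1 := by rw [hQ, Matrix.mul_assoc, Matrix.nonsing_inv_mul _ hdet]
  have hDsym : Dᵀ = D := by rw [hD, Matrix.diagonal_transpose]
  have hEDsym : EDᵀ = ED := by
    rw [hED, ← Matrix.exp_transpose, Matrix.transpose_smul, hDsym]
  have hPrV : Pr = V * Q := by rw [hPr, hQ, Matrix.mul_assoc]
  have hinter : Q * EP = Eh * Q := by
    rw [hEP, hEh]
    refine mul_exp_intertwine Q _ _ ?_
    rw [Matrix.mul_smul, Matrix.smul_mul]
    congr 1
    rw [hPrV, hAh]
    simp only [Matrix.mul_assoc]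
  have hmain : EA * (B * tBᵀ) * ED - B * tBᵀ = A * V + V * D := by
    have h3 := congrArg Neg.neg hV
    simp only [neg_sub, sub_neg_eq_add] at h3
    exact h3.symm
  have hKV : K *ᵥ vecC V = vecC (A * V + V * D) := by
    simp only [hKdef, Matrix.add_mulVec, kron_mulVec, Matrix.transpose_one, Matrix.mul_one,
      Matrix.one_mul, hDsym, vecC_add]
  have hKh1 : Kh *ᵥ vecC (1 : Matrix (Fin r) (Fin r) ℝ) = vecC (Ah + D) := by
    simp only [hKhdef, Matrix.add_mulVec, kron_mulVec, Matrix.transpose_one, Matrix.mul_one,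
      Matrix.one_mul, hDsym, vecC_add]
  have hS : S *ᵥ u = vecC (A * V + V * D) := by
    rw [hSdef, Matrix.sub_mulVec, hu, kron_mulVec, kron_mulVec, ← vecC_sub]
    rw [Matrix.mul_one, Matrix.mul_one, Matrix.transpose_mul, hEDsym, ← hmain]
    simp only [Matrix.mul_assoc]
  have hSh : Sh *ᵥ u - SE *ᵥ u = vecC (Ah + D) := by
    rw [hShdef, hSEdef, Matrix.sub_mulVec, hu, kron_mulVec, kron_mulVec, kron_mulVec,
      ← vecC_sub, ← vecC_sub]
    rw [Matrix.mul_one, Matrix.mul_one, Matrix.mul_one, Matrix.transpose_mul, hEDsym, hBh]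
    have e1 : Q * (EP - EA) * B = Eh * (Q * B) - Q * (EA * B) := by
      rw [Matrix.mul_sub, hinter, Matrix.sub_mul]
      simp only [Matrix.mul_assoc]
    rw [e1, Matrix.sub_mul]
    have e2 : Q * (EA * B) * (tBᵀ * ED) - Q * B * tBᵀ = Ah + D := by
      have e3 : Q * (EA * B) * (tBᵀ * ED) - Q * B * tBᵀ
          = Q * (EA * (B * tBᵀ) * ED - B * tBᵀ) := by
        rw [Matrix.mul_sub]
        simp only [Matrix.mul_assoc]
      rw [e3, hmain, Matrix.mul_add, ← Matrix.mul_assoc, ← Matrix.mul_assoc, hQV,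
        Matrix.one_mul, hAh]
    rw [← e2]
    exact sub_sub_sub_cancel_left _ _ _
  -- now assemble
  simp only [← Matrix.mulVec_mulVec]
  have H2 : ((1 : Matrix (Fin r) (Fin r) ℝ) ⊗ₖ C) *ᵥ (K⁻¹ *ᵥ (S *ᵥ u)) = vecC (C * V) := by
    rw [hS, ← hKV, Matrix.mulVec_mulVec (vecC V) K⁻¹ K, Matrix.nonsing_inv_mul _ hdetK, Matrix.one_mulVec,
      kron_mulVec, Matrix.transpose_one, Matrix.mul_one]
  have H1 : ((1 : Matrix (Fin r) (Fin r) ℝ) ⊗ₖ Ch) *ᵥ (Kh⁻¹ *ᵥ (Sh *ᵥ u))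
      - ((1 : Matrix (Fin r) (Fin r) ℝ) ⊗ₖ Ch) *ᵥ (Kh⁻¹ *ᵥ (SE *ᵥ u)) = vecC (C * V) := by
    rw [← Matrix.mulVec_sub, ← Matrix.mulVec_sub, hSh, ← hKh1,
      Matrix.mulVec_mulVec (vecC (1 : Matrix (Fin r) (Fin r) ℝ)) Kh⁻¹ Kh,
      Matrix.nonsing_inv_mul _ hdetKh, Matrix.one_mulVec, kron_mulVec, Matrix.transpose_one,
      Matrix.mul_one, hCh, Matrix.mul_one]
  rw [H2, ← H1]
  exact sub_sub_cancel _ _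
end
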